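/- Let a_1,...,a_{g+3} be distinct complex numbers, Π(X) = ∏_i(X − a_i), and let A_x be the ℂ-algebra generated by a variable x̂ (with all rational functions of x̂ adjoined) and ŷ subject to [ŷ, φ(x̂)] = 2Π(x̂) φ'(x̂) for every rational function φ regular at x̂. In A_x^{⊗g}, with x̂_α, ŷ_α the generators of the α-th factor, the series X̂(t) = ∑_α 1/(t − x̂_α) and Ŷ(t) = ∑_α Π(x̂_α)^{-1} ŷ_α/(t − x̂_α) satisfy [Ŷ(t), X̂(s)] = 2 ∂_s( (X̂(s) − X̂(t))/(s − t) ). -/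
import Mathlib


open Finset

/-- let `A_x` be the algebra `ℂ(x̂)[ŷ]` with relation
`[ŷ, φ(x̂)] = 2Π(x̂)φ'(x̂)` (`Π(X) = ∏_{i=1}^{g+3}(X - a_i)`), and work in `A_x^{⊗g}` —
presented here as any `ℂ`-algebra `A` with, for each `α`, elements `x̂_α`, `ŷ_α`,
inverses `(s - x̂_α)⁻¹` (for every scalar `s`) and `Π(x̂_α)⁻¹`, such that all "functions
of the `x̂`'s" commute, elements of distinct factors commute, and
`[ŷ_α, p(x̂_α)] = 2Π(x̂_α)p'(x̂_α)` for polynomials `p`.  Then the series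
`X̂(t) = ∑_α (t - x̂_α)⁻¹` and `Ŷ(t) = ∑_α Π(x̂_α)⁻¹ (t - x̂_α)⁻¹ ŷ_α` satisfy
`[Ŷ(t), X̂(s)] = 2 ∂_s((X̂(s) - X̂(t))/(s - t))`, the derivative `∂_s` being written out
via `∂_s X̂(s) = -∑_α (s - x̂_α)⁻²`. -/
theorem stmt_16 (g : ℕ) (hg : 1 ≤ g) (a : Fin (g+3) → ℂ) (ha : Function.Injective a)
    (A : Type) [Ring A] [Algebra ℂ A]
    (x y : Fin g → A) (xinv : Fin g → ℂ → A) (Pinv : Fin g → A)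
    (hxinv : ∀ α s, (algebraMap ℂ A s - x α) * xinv α s = 1 ∧
        xinv α s * (algebraMap ℂ A s - x α) = 1)
    (hPinv : ∀ α, (List.ofFn (fun i => x α - algebraMap ℂ A (a i))).prod * Pinv α = 1 ∧
        Pinv α * (List.ofFn (fun i => x α - algebraMap ℂ A (a i))).prod = 1)
    (hcommx : ∀ u ∈ (Set.range x ∪ Set.range Pinv ∪
          {z | ∃ α s, z = xinv α s} : Set A),
        ∀ v ∈ (Set.range x ∪ Set.range Pinv ∪
          {z | ∃ α s, z = xinv α s} : Set A), u * v = v * u)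
    (hyx : ∀ α (p : Polynomial ℂ),
        y α * Polynomial.aeval (x α) p - Polynomial.aeval (x α) p * y α
          = (2 : ℂ) • ((List.ofFn (fun i => x α - algebraMap ℂ A (a i))).prod *
              Polynomial.aeval (x α) (Polynomial.derivative p)))
    (hycross : ∀ α β, α ≠ β → (y α * x β = x β * y α) ∧ (y α * Pinv β = Pinv β * y α) ∧
        (∀ s, y α * xinv β s = xinv β s * y α)) :
    ∀ s t : ℂ, s ≠ t →
      (∑ α, Pinv α * xinv α t * y α) * (∑ α, xinv α s)
          - (∑ α, xinv α s) * (∑ α, Pinv α * xinv α t * y α)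
        = (2 : ℂ) • ((s - t)⁻¹ • (- ∑ α, xinv α s * xinv α s)
            - (((s - t) ^ 2)⁻¹) • ((∑ α, xinv α s) - ∑ α, xinv α t)) := by
  intro s t hst
  have hc : s - t ≠ 0 := sub_ne_zero.mpr hst
  set S : Set A := (Set.range x ∪ Set.range Pinv ∪ {z | ∃ α s, z = xinv α s}) with hS
  have hmx : ∀ α, x α ∈ S := fun α => Or.inl (Or.inl ⟨α, rfl⟩)
  have hmP : ∀ α, Pinv α ∈ S := fun α => Or.inl (Or.inr ⟨α, rfl⟩)
  have hmi : ∀ α r, xinv α r ∈ S := fun α r => Or.inr ⟨α, r, rfl⟩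
  -- Π(x α)
  set Pi : Fin g → A := fun α => (List.ofFn (fun i => x α - algebraMap ℂ A (a i))).prod
    with hPi
  have hPiComm : ∀ z ∈ S, ∀ α, z * Pi α = Pi α * z := by
    intro z hz α
    have : Commute z (Pi α) := by
      apply Commute.list_prod_right
      intro w hw
      rw [List.mem_ofFn] at hw
      obtain ⟨i, rfl⟩ := hw
      exact Commute.sub_right (hcommx z hz _ (hmx α)) (Algebra.commutes (a i) z).symm
    exact this
  -- key commutator [y α, (r - x α)⁻¹] = 2 Π (r-x)⁻²
  have hyv : ∀ α (r : ℂ), y α * xinv α r - xinv α r * y α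
      = (2 : ℂ) • (Pi α * (xinv α r * xinv α r)) := by
    intro α r
    obtain ⟨hu1, hu2⟩ := hxinv α r
    set v := xinv α r with hv
    set u := algebraMap ℂ A r - x α with hu
    have hx : y α * x α - x α * y α = (2 : ℂ) • Pi α := by
      have h := hyx α Polynomial.X
      simp only [Polynomial.aeval_X, Polynomial.derivative_X, map_one, mul_one] at h
      exact h
    have key : u * y α - y α * u = (2 : ℂ) • Pi α := by
      have hcm : algebraMap ℂ A r * y α = y α * algebraMap ℂ A r := Algebra.commutes r (y α)
      have : u * y α - y α * u = y α * x α - x α * y α := by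
        rw [hu, sub_mul, mul_sub, hcm]; abel
      rw [this, hx]
    have e1 : v * (u * y α) * v = y α * v := by
      rw [← mul_assoc, hu2, one_mul]
    have e2 : v * (y α * u) * v = v * y α := by
      rw [mul_assoc, mul_assoc, hu1, mul_one]
    have e3 : v * (u * y α - y α * u) * v = y α * v - v * y α := by
      rw [mul_sub, sub_mul, e1, e2]
    rw [← e3, key, mul_smul_comm, smul_mul_assoc]
    congr 1
    rw [hPiComm v (hmi α r) α, mul_assoc]
  -- partial fractions : w * v = (s-t)⁻¹ • (w - v)
  have hwv : ∀ α, xinv α t * xinv α s = (s - t)⁻¹ • (xinv α t - xinv α s) := by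
    intro α
    obtain ⟨hs1, hs2⟩ := hxinv α s
    obtain ⟨ht1, ht2⟩ := hxinv α t
    set v := xinv α s with hvdef
    set w := xinv α t with hwdef
    have key : w = v + (s - t) • (w * v) := by
      have h1 : w * ((algebraMap ℂ A s - x α) * v) = w := by rw [hs1, mul_one]
      have h2 : (algebraMap ℂ A s - x α)
          = (algebraMap ℂ A t - x α) + algebraMap ℂ A (s - t) := by
        rw [map_sub]; abel
      rw [h2, add_mul, mul_add, ← mul_assoc, ht2, one_mul] at h1
      have h3 : w * (algebraMap ℂ A (s - t) * v) = (s - t) • (w * v) := by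
        rw [← Algebra.smul_def, mul_smul_comm]
      rw [h3] at h1
      exact h1.symm
    have h4 : w - v = (s - t) • (w * v) := sub_eq_of_eq_add' key
    rw [h4, smul_smul, inv_mul_cancel₀ hc, one_smul]
  have hwvv : ∀ α, xinv α t * (xinv α s * xinv α s)
      = ((s - t) ^ 2)⁻¹ • (xinv α t - xinv α s) - (s - t)⁻¹ • (xinv α s * xinv α s) := by
    intro α
    have hcc : ((s - t) ^ 2)⁻¹ = (s - t)⁻¹ * (s - t)⁻¹ := by rw [sq, mul_inv]
    rw [← mul_assoc, hwv α, smul_mul_assoc, sub_mul, hwv α, smul_sub, smul_smul, hcc]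
  -- diagonal terms
  have hdiag : ∀ α, (Pinv α * xinv α t * y α) * xinv α s
      - xinv α s * (Pinv α * xinv α t * y α)
      = (2 : ℂ) • ((s - t)⁻¹ • (-(xinv α s * xinv α s))
          - ((s - t) ^ 2)⁻¹ • (xinv α s - xinv α t)) := by
    intro α
    set v := xinv α s with hvdef
    set w := xinv α t with hwdef
    have hvP : v * Pinv α = Pinv α * v := hcommx _ (hmi α s) _ (hmP α)
    have hvw : v * w = w * v := hcommx _ (hmi α s) _ (hmi α t)
    have hVT : v * (Pinv α * w * y α) = Pinv α * w * (v * y α) := by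
      rw [← mul_assoc, ← mul_assoc, ← mul_assoc, hvP, mul_assoc (Pinv α), hvw,
        ← mul_assoc]
    have hTV : (Pinv α * w * y α) * v = Pinv α * w * (y α * v) := by
      rw [mul_assoc]
    rw [hTV, hVT, ← mul_sub, hyv α s, mul_smul_comm]
    have hPwPi : Pinv α * w * (Pi α * (v * v)) = w * (v * v) := by
      rw [← mul_assoc, mul_assoc (Pinv α), hPiComm w (hmi α t) α, ← mul_assoc]
      simp only [hPi]
      rw [← mul_assoc (Pinv α), (hPinv α).2, one_mul, mul_assoc]
    rw [hPwPi, hwvv α]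
    module
  -- off-diagonal terms commute
  have hoff : ∀ α β, α ≠ β → (Pinv α * xinv α t * y α) * xinv β s
      = xinv β s * (Pinv α * xinv α t * y α) := by
    intro α β hne
    have h1 : xinv β s * Pinv α = Pinv α * xinv β s := hcommx _ (hmi β s) _ (hmP α)
    have h2 : xinv β s * xinv α t = xinv α t * xinv β s := hcommx _ (hmi β s) _ (hmi α t)
    have h3 : y α * xinv β s = xinv β s * y α := (hycross α β hne).2.2 s
    rw [mul_assoc, mul_assoc, h3, ← mul_assoc (xinv α t), ← h2, ← mul_assoc,
      ← mul_assoc, ← h1, mul_assoc, mul_assoc, ← mul_assoc (Pinv α) (xinv α t) (y α)]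
  -- combine sums
  have key : (∑ α, Pinv α * xinv α t * y α) * (∑ α, xinv α s)
      - (∑ α, xinv α s) * (∑ α, Pinv α * xinv α t * y α)
      = ∑ α, ((Pinv α * xinv α t * y α) * xinv α s
          - xinv α s * (Pinv α * xinv α t * y α)) := by
    rw [Finset.sum_mul_sum, Finset.sum_mul_sum]
    rw [Finset.sum_comm (f := fun β α => xinv β s * (Pinv α * xinv α t * y α))]
    rw [← Finset.sum_sub_distrib]
    refine Finset.sum_congr rfl fun α _ => ?_
    rw [← Finset.sum_sub_distrib]
    refine Finset.sum_eq_single α (fun β _ hβα => ?_) (fun h => absurd (mem_univ α) h)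
    rw [hoff α β (Ne.symm hβα), sub_self]
  rw [key]
  have hR : (2 : ℂ) • ((s - t)⁻¹ • (- ∑ α, xinv α s * xinv α s)
        - ((s - t) ^ 2)⁻¹ • ((∑ α, xinv α s) - ∑ α, xinv α t))
      = ∑ α, (2 : ℂ) • ((s - t)⁻¹ • (-(xinv α s * xinv α s))
          - ((s - t) ^ 2)⁻¹ • (xinv α s - xinv α t)) := by
    rw [← Finset.sum_neg_distrib, ← Finset.sum_sub_distrib, Finset.smul_sum,
      Finset.smul_sum, ← Finset.sum_sub_distrib, ← Finset.smul_sum]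
  rw [hR]
  exact Finset.sum_congr rfl fun α _ => hdiag α
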